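/- Let Ω be a finite set, A₀, A₁ : Ω → ℝ≥0 probability mass functions with full support, and a, b > 0 nonnegative reals with a + b > 0. Then the function q ↦ a·D_KL(A₁‖q) + b·D_KL(A₀‖q), over probability mass functions q with full support on Ω, attains its minimum uniquely at q(u) = (a·A₁(u) + b·A₀(u))/(a + b). -/

import Mathlib

open Finset

noncomputable def KL {Ω : Type*} [Fintype Ω] (A q : Ω → ℝ) : ℝ :=
  ∑ u, A u * Real.log (A u / q u)

lemma term_le (p q : ℝ) (hp : 0 < p) (hq : 0 < q) :
    p - q ≤ p * Real.log (p / q) := by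
  have h1 : Real.log (q / p) ≤ q / p - 1 := Real.log_le_sub_one_of_pos (div_pos hq hp)
  have h2 : Real.log (p / q) = - Real.log (q / p) := by
    rw [← Real.log_inv, inv_div]
  have h3 : p * (q / p) = q := by field_simp
  nlinarith [mul_le_mul_of_nonneg_left h1 hp.le]

lemma term_eq (p q : ℝ) (hp : 0 < p) (hq : 0 < q)
    (h : p * Real.log (p / q) = p - q) : q = p := by
  by_contra hne
  have hne1 : q / p ≠ 1 := by
    intro h1
    exact hne (by field_simp at h1; linarith)
  have h1 : Real.log (q / p) < q / p - 1 :=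
    Real.log_lt_sub_one_of_pos (div_pos hq hp) hne1
  have h2 : Real.log (p / q) = - Real.log (q / p) := by
    rw [← Real.log_inv, inv_div]
  have h3 : p * (q / p) = q := by field_simp
  nlinarith [mul_lt_mul_of_pos_left h1 hp]

lemma gibbs {Ω : Type*} [Fintype Ω] (p q : Ω → ℝ)
    (hp : ∀ u, 0 < p u) (hq : ∀ u, 0 < q u)
    (hps : ∑ u, p u = 1) (hqs : ∑ u, q u = 1) :
    0 ≤ KL p q ∧ (KL p q = 0 ↔ q = p) := by
  have hsum : ∑ u, (p u - q u) = 0 := by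
    rw [Finset.sum_sub_distrib, hps, hqs]; ring
  have hle : ∑ u, (p u - q u) ≤ KL p q :=
    Finset.sum_le_sum (fun u _ => term_le (p u) (q u) (hp u) (hq u))
  have hnn : 0 ≤ KL p q := by linarith
  refine ⟨hnn, ?_, ?_⟩
  · intro h0
    have hz : ∑ u, (p u * Real.log (p u / q u) - (p u - q u)) = 0 := by
      rw [Finset.sum_sub_distrib, hsum]
      simpa [KL] using h0
    have hall := (Finset.sum_eq_zero_iff_of_nonneg
      (fun u _ => by linarith [term_le (p u) (q u) (hp u) (hq u)])).mp hz
    funext u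
    have := hall u (Finset.mem_univ u)
    exact term_eq (p u) (q u) (hp u) (hq u) (by linarith)
  · intro h
    subst h
    apply Finset.sum_eq_zero
    intro u _
    rw [div_self (hq u).ne', Real.log_one, mul_zero]

theorem stmt1 {Ω : Type*} [Fintype Ω] (A₀ A₁ : Ω → ℝ)
    (hA₀pos : ∀ u, 0 < A₀ u) (hA₀sum : ∑ u, A₀ u = 1)
    (hA₁pos : ∀ u, 0 < A₁ u) (hA₁sum : ∑ u, A₁ u = 1)
    (a b : ℝ) (ha : 0 < a) (hb : 0 < b) :
    ∀ q : Ω → ℝ, (∀ u, 0 < q u) → (∑ u, q u = 1) →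
      (a * KL A₁ (fun u => (a * A₁ u + b * A₀ u) / (a + b))
        + b * KL A₀ (fun u => (a * A₁ u + b * A₀ u) / (a + b))
        ≤ a * KL A₁ q + b * KL A₀ q)
      ∧ (a * KL A₁ q + b * KL A₀ q
          = a * KL A₁ (fun u => (a * A₁ u + b * A₀ u) / (a + b))
            + b * KL A₀ (fun u => (a * A₁ u + b * A₀ u) / (a + b))
        ↔ q = fun u => (a * A₁ u + b * A₀ u) / (a + b)) := by
  intro q hq hqs
  set m : Ω → ℝ := fun u => (a * A₁ u + b * A₀ u) / (a + b) with hm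
  have hab : 0 < a + b := by linarith
  have hmpos : ∀ u, 0 < m u := fun u =>
    div_pos (by nlinarith [hA₀pos u, hA₁pos u]) hab
  have hmsum : ∑ u, m u = 1 := by
    simp only [hm, ← Finset.sum_div, Finset.sum_add_distrib, ← Finset.mul_sum,
      hA₀sum, hA₁sum]
    field_simp
  have key : a * KL A₁ q + b * KL A₀ q
      = a * KL A₁ m + b * KL A₀ m + (a + b) * KL m q := by
    simp only [KL, Finset.mul_sum, ← Finset.sum_add_distrib]
    apply Finset.sum_congr rfl
    intro u _
    have hm' : (a + b) * m u = a * A₁ u + b * A₀ u := by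
      show (a + b) * ((a * A₁ u + b * A₀ u) / (a + b)) = _
      field_simp
    rw [Real.log_div (hA₁pos u).ne' (hq u).ne',
        Real.log_div (hA₀pos u).ne' (hq u).ne',
        Real.log_div (hA₁pos u).ne' (hmpos u).ne',
        Real.log_div (hA₀pos u).ne' (hmpos u).ne',
        Real.log_div (hmpos u).ne' (hq u).ne']
    linear_combination (Real.log (q u) - Real.log (m u)) * hm'
  obtain ⟨hnn, heq⟩ := gibbs m q hmpos hq hmsum hqs
  constructor
  · nlinarith
  · constructor
    · intro h
      apply heq.mp
      nlinarith
    · intro h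
      subst h
      rw [key, heq.mpr rfl]
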